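/- For all n ∈ ℕ and all z ∈ ℂ^d, 1/√(K_n^μ(z,z)) = min{‖p‖_{2,μ} : p ∈ ℒ_n(μ), p(z) = 1}. Moreover, for all k, n ∈ ℕ with k_n^μ ≤ k < k_{n+1}^μ and all z ∈ 𝒮_{n+1}(μ), 1/√(K_n^μ(z,z)) = min{‖p‖_{2,μ} : p a polynomial of degree ≤ k with p(z) = 1}. -/

import Mathlib

open MeasureTheory Matrix Finset

namespace CD

variable {d : ℕ}

/-- The `L²(μ)` inner product of two polynomial functions. -/
noncomputable def inner2 (μ : Measure (Fin d → ℂ)) (f g : MvPolynomial (Fin d) ℂ) : ℂ :=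
  ∫ z, MvPolynomial.eval z f * (starRingEnd ℂ) (MvPolynomial.eval z g) ∂μ

/-- The moment matrix `M̃_k(μ)` for an enumeration `α` of multi-indices. -/
noncomputable def momentMatrix (μ : Measure (Fin d → ℂ)) (α : ℕ → (Fin d →₀ ℕ)) (k : ℕ) :
    Matrix (Fin (k + 1)) (Fin (k + 1)) ℂ :=
  Matrix.of fun j ℓ =>
    inner2 μ (MvPolynomial.monomial (α (ℓ : ℕ)) 1) (MvPolynomial.monomial (α (j : ℕ)) 1)

/-- `k_n^μ = min {k : rank M̃_k(μ) = n+1}`. -/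
noncomputable def kdeg (μ : Measure (Fin d → ℂ)) (α : ℕ → (Fin d →₀ ℕ)) (n : ℕ) : ℕ :=
  sInf {k | (momentMatrix μ α k).rank = n + 1}

/-- `deg p ≤ k` with respect to the enumeration `α`. -/
def DegLE (α : ℕ → (Fin d →₀ ℕ)) (p : MvPolynomial (Fin d) ℂ) (k : ℕ) : Prop :=
  ∀ m : ℕ, MvPolynomial.coeff (α m) p ≠ 0 → m ≤ k

/-- `deg p = k` with respect to the enumeration `α`. -/
def DegEq (α : ℕ → (Fin d →₀ ℕ)) (p : MvPolynomial (Fin d) ℂ) (k : ℕ) : Prop :=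
  DegLE α p k ∧ MvPolynomial.coeff (α k) p ≠ 0

/-- An admissible enumeration of all multi-indices: a bijection starting at `0` such that
multiplication by any variable increases the index. -/
def AdmissibleEnum (α : ℕ → (Fin d →₀ ℕ)) : Prop :=
  Function.Bijective α ∧ α 0 = 0 ∧
    ∀ (j : Fin d) (n : ℕ), ∃ k : ℕ, n < k ∧ α k = α n + Finsupp.single j 1

/-- The Christoffel–Darboux kernel `K_n(z,w) = ∑_{j≤n} p_j(z) conj (p_j(w))`. -/
noncomputable def CDkernel (p : ℕ → MvPolynomial (Fin d) ℂ) (n : ℕ) (z w : Fin d → ℂ) : ℂ :=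
  ∑ j ∈ Finset.range (n + 1),
    MvPolynomial.eval z (p j) * (starRingEnd ℂ) (MvPolynomial.eval w (p j))

/-- `p_0, …, p_n` is the Gram–Schmidt orthonormal family in `L²(μ)`:
orthonormal, with `p_m` a linear combination of the monomials `z^{α(k_0)},…,z^{α(k_m)}`
with positive (real) leading coefficient. -/
def IsONBasisUpTo (μ : Measure (Fin d → ℂ)) (α : ℕ → (Fin d →₀ ℕ))
    (p : ℕ → MvPolynomial (Fin d) ℂ) (n : ℕ) : Prop :=
  (∀ i ≤ n, ∀ j ≤ n, inner2 μ (p i) (p j) = if i = j then 1 else 0) ∧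
  (∀ m ≤ n, ∃ c : Fin (m + 1) → ℂ, 0 < (c (Fin.last m)).re ∧ (c (Fin.last m)).im = 0 ∧
      p m = ∑ i : Fin (m + 1), MvPolynomial.monomial (α (kdeg μ α (i : ℕ))) (c i))

/-- The full Gram–Schmidt orthonormal sequence of `μ`. -/
def IsONBasis (μ : Measure (Fin d → ℂ)) (α : ℕ → (Fin d →₀ ℕ))
    (p : ℕ → MvPolynomial (Fin d) ℂ) : Prop :=
  ∀ n, IsONBasisUpTo μ α p n

/-- The (closed) support of a measure. -/
def msupport {X : Type*} [TopologicalSpace X] [MeasurableSpace X] (μ : Measure X) : Set X :=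
  {x | ∀ U : Set X, x ∈ U → IsOpen U → μ U ≠ 0}

/-- `𝒩(μ)`: the ideal of polynomials vanishing on `supp(μ)`. -/
def Nideal (μ : Measure (Fin d → ℂ)) : Set (MvPolynomial (Fin d) ℂ) :=
  {q | ∀ z ∈ msupport μ, MvPolynomial.eval z q = 0}

/-- `𝒩_n(μ) = {p ∈ 𝒩(μ) : deg p ≤ k_n^μ}`. -/
def NidealLE (μ : Measure (Fin d → ℂ)) (α : ℕ → (Fin d →₀ ℕ)) (n : ℕ) :
    Set (MvPolynomial (Fin d) ℂ) :=
  {q | q ∈ Nideal μ ∧ DegLE α q (kdeg μ α n)}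

/-- `𝒮_n(μ)`: the common zero set of `𝒩_n(μ)`. -/
def Svariety (μ : Measure (Fin d → ℂ)) (α : ℕ → (Fin d →₀ ℕ)) (n : ℕ) : Set (Fin d → ℂ) :=
  {z | ∀ q ∈ NidealLE μ α n, MvPolynomial.eval z q = 0}

/-- `𝒮(μ)`: the Zariski closure of `supp(μ)`, i.e. the common zero set of `𝒩(μ)`. -/
def Szar (μ : Measure (Fin d → ℂ)) : Set (Fin d → ℂ) :=
  {z | ∀ q ∈ Nideal μ, MvPolynomial.eval z q = 0}

/-- `ℒ_n(μ)`: the span of `p_0,…,p_n`. -/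
def Lspan (p : ℕ → MvPolynomial (Fin d) ℂ) (n : ℕ) : Set (MvPolynomial (Fin d) ℂ) :=
  {q | ∃ c : Fin (n + 1) → ℂ, q = ∑ j : Fin (n + 1), c j • p (j : ℕ)}

/-- The `L²(μ)` norm of a polynomial. -/
noncomputable def norm2 (μ : Measure (Fin d → ℂ)) (f : MvPolynomial (Fin d) ℂ) : ℝ :=
  Real.sqrt ((inner2 μ f f).re)

/-- Multivariate cosine function `C_n(z,w)`. -/
noncomputable def coskM (p : ℕ → MvPolynomial (Fin d) ℂ) (n : ℕ) (z w : Fin d → ℂ) : ℂ :=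
  CDkernel p n z w /
    ((Real.sqrt ((CDkernel p n z z).re) * Real.sqrt ((CDkernel p n w w).re) : ℝ) : ℂ)





section Aux
open MvPolynomial


lemma measure_msupport_compl (μ : Measure (Fin d → ℂ)) : μ (msupport μ)ᶜ = 0 := by
  have h : (msupport μ)ᶜ = ⋃₀ {U : Set (Fin d → ℂ) | IsOpen U ∧ μ U = 0} := by
    ext x
    simp only [Set.mem_compl_iff, msupport, Set.mem_setOf_eq, Set.mem_sUnion]
    constructor
    · intro hx
      push_neg at hx
      obtain ⟨U, hxU, hU, hμU⟩ := hx
      exact ⟨U, ⟨hU, hμU⟩, hxU⟩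
    · rintro ⟨U, ⟨hU, hμU⟩, hxU⟩ hc
      exact hc U hxU hU hμU
  obtain ⟨T, hTc, hTsub, hTU⟩ :=
    TopologicalSpace.isOpen_sUnion_countable {U : Set (Fin d → ℂ) | IsOpen U ∧ μ U = 0}
      (fun s hs => hs.1)
  rw [h, ← hTU, measure_sUnion_null_iff hTc]
  exact fun s hs => (hTsub hs).2

lemma ae_mem_msupport (μ : Measure (Fin d → ℂ)) : ∀ᵐ z ∂μ, z ∈ msupport μ := by
  rw [MeasureTheory.ae_iff]
  exact measure_msupport_compl μ

lemma integrable_of_continuous (μ : Measure (Fin d → ℂ)) [IsFiniteMeasure μ]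
    (hμc : IsCompact (msupport μ)) {E : Type*} [NormedAddCommGroup E] {f : (Fin d → ℂ) → E}
    (hf : Continuous f) : Integrable f μ := by
  obtain ⟨C, hC⟩ := hμc.exists_bound_of_continuousOn hf.continuousOn
  have hae : ∀ᵐ z ∂μ, ‖f z‖ ≤ C := by
    filter_upwards [ae_mem_msupport μ] with z hz using hC z hz
  exact (integrable_const C).mono' hf.aestronglyMeasurable hae


variable {μ : Measure (Fin d → ℂ)} [IsFiniteMeasure μ] (hμc : IsCompact (msupport μ))
include hμc
set_option linter.unusedSectionVars false

lemma integrable_i2 (f g : MvPolynomial (Fin d) ℂ) :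
    Integrable (fun z => eval z f * (starRingEnd ℂ) (eval z g)) μ := by
  refine integrable_of_continuous μ hμc ?_
  simp only [starRingEnd_apply]
  exact f.continuous_eval.mul g.continuous_eval.star

lemma inner2_smul_left (c : ℂ) (f g : MvPolynomial (Fin d) ℂ) :
    inner2 μ (c • f) g = c * inner2 μ f g := by
  simp only [inner2, smul_eq_C_mul, _root_.map_mul, eval_C, mul_assoc]
  exact integral_const_mul c _

lemma inner2_smul_right (c : ℂ) (f g : MvPolynomial (Fin d) ℂ) :
    inner2 μ f (c • g) = (starRingEnd ℂ) c * inner2 μ f g := by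
  simp only [inner2, smul_eq_C_mul, _root_.map_mul, eval_C]
  rw [← integral_const_mul]
  congr 1; ext z; ring

lemma inner2_sum_left {ι : Type*} (s : Finset ι) (f : ι → MvPolynomial (Fin d) ℂ)
    (g : MvPolynomial (Fin d) ℂ) :
    inner2 μ (∑ i ∈ s, f i) g = ∑ i ∈ s, inner2 μ (f i) g := by
  simp only [inner2, map_sum, Finset.sum_mul]
  exact integral_finset_sum s (fun i _ => integrable_i2 hμc (f i) g)

lemma inner2_sum_right {ι : Type*} (s : Finset ι) (f : MvPolynomial (Fin d) ℂ)
    (g : ι → MvPolynomial (Fin d) ℂ) :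
    inner2 μ f (∑ i ∈ s, g i) = ∑ i ∈ s, inner2 μ f (g i) := by
  simp only [inner2, map_sum, Finset.mul_sum]
  exact integral_finset_sum s (fun i _ => integrable_i2 hμc f (g i))

lemma inner2_zero_left_of_ae {f : MvPolynomial (Fin d) ℂ}
    (hf : (fun z => eval z f) =ᵐ[μ] 0) (g : MvPolynomial (Fin d) ℂ) :
    inner2 μ f g = 0 := by
  rw [inner2, ← integral_zero (Fin d → ℂ) ℂ (μ := μ)]
  apply integral_congr_ae
  filter_upwards [hf] with z hz
  simp [hz]

lemma inner2_zero_right_of_ae {g : MvPolynomial (Fin d) ℂ}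
    (hg : (fun z => eval z g) =ᵐ[μ] 0) (f : MvPolynomial (Fin d) ℂ) :
    inner2 μ f g = 0 := by
  rw [inner2, ← integral_zero (Fin d → ℂ) ℂ (μ := μ)]
  apply integral_congr_ae
  filter_upwards [hg] with z hz
  simp [hz]

lemma inner2_self_eq (f : MvPolynomial (Fin d) ℂ) :
    inner2 μ f f = ((∫ z, Complex.normSq (eval z f) ∂μ : ℝ) : ℂ) := by
  rw [inner2]
  have h : ∀ z : Fin d → ℂ, (eval z f) * (starRingEnd ℂ) (eval z f)
      = ((Complex.normSq (eval z f) : ℝ) : ℂ) := fun z => Complex.mul_conj _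
  simp_rw [h]
  exact integral_ofReal

lemma inner2_self_nonneg (f : MvPolynomial (Fin d) ℂ) : 0 ≤ (inner2 μ f f).re := by
  rw [inner2_self_eq hμc, Complex.ofReal_re]
  exact integral_nonneg (fun z => Complex.normSq_nonneg _)

lemma inner2_self_eq_zero_iff (f : MvPolynomial (Fin d) ℂ) :
    inner2 μ f f = 0 ↔ (fun z => eval z f) =ᵐ[μ] 0 := by
  rw [inner2_self_eq hμc, Complex.ofReal_eq_zero]
  have hint : Integrable (fun z => Complex.normSq (eval z f)) μ :=
    integrable_of_continuous μ hμc (Complex.continuous_normSq.comp f.continuous_eval)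
  rw [integral_eq_zero_iff_of_nonneg (fun z => Complex.normSq_nonneg _) hint]
  constructor
  · intro h; filter_upwards [h] with z hz
    simpa [Complex.normSq_eq_zero] using hz
  · intro h; filter_upwards [h] with z hz
    simp only [Pi.zero_apply] at hz ⊢
    simp [hz]

end Aux

section LinAlg
open MvPolynomial Module

variable {μ : Measure (Fin d → ℂ)} [IsFiniteMeasure μ] {α : ℕ → (Fin d →₀ ℕ)}

/-- The linear map sending a coefficient vector to the corresponding polynomial. -/
noncomputable def Pk (α : ℕ → (Fin d →₀ ℕ)) (k : ℕ) :
    (Fin (k+1) → ℂ) →ₗ[ℂ] MvPolynomial (Fin d) ℂ :=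
  ∑ i : Fin (k+1), (MvPolynomial.monomial (α (i : ℕ))).comp (LinearMap.proj i)

lemma Pk_apply (α : ℕ → (Fin d →₀ ℕ)) (k : ℕ) (x : Fin (k+1) → ℂ) :
    Pk α k x = ∑ i : Fin (k+1), monomial (α (i : ℕ)) (x i) := by
  simp [Pk, LinearMap.sum_apply]

/-- The null space: coefficient vectors of polynomials vanishing μ-a.e. -/
noncomputable def Nsub (μ : Measure (Fin d → ℂ)) (α : ℕ → (Fin d →₀ ℕ)) (k : ℕ) :
    Submodule ℂ (Fin (k+1) → ℂ) where
  carrier := {x | (fun z => eval z (Pk α k x)) =ᵐ[μ] 0}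
  add_mem' := by
    intro a b ha hb
    show (fun z => eval z (Pk α k (a + b))) =ᵐ[μ] 0
    filter_upwards [ha, hb] with z hz1 hz2
    simp only [Set.mem_setOf_eq, Pi.zero_apply] at hz1 hz2 ⊢
    simp [map_add, hz1, hz2]
  zero_mem' := by
    show (fun z => eval z (Pk α k 0)) =ᵐ[μ] 0
    simp only [map_zero]
    exact Filter.Eventually.of_forall (fun z => rfl)
  smul_mem' := by
    intro c x hx
    show (fun z => eval z (Pk α k (c • x))) =ᵐ[μ] 0
    filter_upwards [hx] with z hz
    simp only [Set.mem_setOf_eq, Pi.zero_apply] at hz ⊢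
    simp [_root_.map_smul, smul_eq_C_mul, hz]

omit [IsFiniteMeasure μ] in
lemma mem_Nsub {k : ℕ} {x : Fin (k+1) → ℂ} :
    x ∈ Nsub μ α k ↔ (fun z => eval z (Pk α k x)) =ᵐ[μ] 0 := Iff.rfl

variable (hμc : IsCompact (msupport μ))
include hμc
set_option linter.unusedSectionVars false

lemma mulVec_momentMatrix (k : ℕ) (x : Fin (k+1) → ℂ) (j : Fin (k+1)) :
    (momentMatrix μ α k).mulVec x j = inner2 μ (Pk α k x) (monomial (α (j : ℕ)) 1) := by
  rw [Pk_apply, inner2_sum_left hμc]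
  simp only [mulVec, dotProduct, momentMatrix, of_apply]
  congr 1; funext i
  have : monomial (α (i : ℕ)) (x i) = x i • monomial (α (i : ℕ)) (1 : ℂ) := by
    rw [smul_monomial, smul_eq_mul, mul_one]
  rw [this, inner2_smul_left hμc, mul_comm]

lemma ker_eq_Nsub (k : ℕ) :
    LinearMap.ker (momentMatrix μ α k).mulVecLin = Nsub μ α k := by
  ext x
  rw [LinearMap.mem_ker, Matrix.mulVecLin_apply, mem_Nsub]
  constructor
  · intro hx
    have h0 : inner2 μ (Pk α k x) (Pk α k x) = 0 := by
      nth_rewrite 2 [Pk_apply]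
      rw [inner2_sum_right hμc]
      have hterm : ∀ j : Fin (k+1),
          inner2 μ (Pk α k x) (monomial (α (j : ℕ)) (x j))
            = (starRingEnd ℂ) (x j) * ((momentMatrix μ α k).mulVec x j) := by
        intro j
        have : monomial (α (j : ℕ)) (x j) = x j • monomial (α (j : ℕ)) (1 : ℂ) := by
          rw [smul_monomial, smul_eq_mul, mul_one]
        rw [this, inner2_smul_right hμc, mulVec_momentMatrix hμc]
      simp only [hterm, hx, Pi.zero_apply, mul_zero, Finset.sum_const_zero]
    exact (inner2_self_eq_zero_iff hμc _).1 h0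
  · intro hx
    funext j
    rw [mulVec_momentMatrix hμc]
    exact inner2_zero_left_of_ae hμc hx _

lemma rank_add_finrank_Nsub (k : ℕ) :
    (momentMatrix μ α k).rank + finrank ℂ (Nsub μ α k) = k + 1 := by
  have h := LinearMap.finrank_range_add_finrank_ker (momentMatrix μ α k).mulVecLin
  rw [ker_eq_Nsub hμc] at h
  rw [Matrix.rank]
  simpa using h

/-- Extension by zero. -/
noncomputable def extMap (k : ℕ) : (Fin (k+1) → ℂ) →ₗ[ℂ] (Fin (k+2) → ℂ) where
  toFun x := Fin.snoc x 0
  map_add' a b := by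
    funext i
    refine Fin.lastCases ?_ (fun i => ?_) i <;> simp
  map_smul' c a := by
    funext i
    refine Fin.lastCases ?_ (fun i => ?_) i <;> simp

omit hμc in
lemma Pk_extMap (k : ℕ) (x : Fin (k+1) → ℂ) :
    Pk α (k+1) (extMap k x) = Pk α k x := by
  rw [Pk_apply, Pk_apply, Fin.sum_univ_castSucc]
  simp [extMap, Fin.snoc_castSucc, Fin.snoc_last]

omit hμc in
lemma Pk_castSucc {k : ℕ} {x : Fin (k+2) → ℂ} (hlast : x (Fin.last (k+1)) = 0) :
    Pk α k (x ∘ Fin.castSucc) = Pk α (k+1) x := by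
  rw [Pk_apply, Pk_apply]
  conv_rhs => rw [Fin.sum_univ_castSucc]
  rw [hlast]
  simp

omit hμc in
lemma finrank_Nsub_mono (k : ℕ) :
    finrank ℂ (Nsub μ α k) ≤ finrank ℂ (Nsub μ α (k+1)) := by
  have hmem : ∀ x ∈ Nsub μ α k, extMap k x ∈ Nsub μ α (k+1) := by
    intro x hx
    rw [mem_Nsub] at hx ⊢
    rw [Pk_extMap]
    exact hx
  have hinj : Function.Injective ((extMap k).restrict hmem) := by
    intro a b hab
    have := congrArg (fun y : Nsub μ α (k+1) => (y : Fin (k+2) → ℂ) ∘ Fin.castSucc) hab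
    ext1
    funext i
    have h2 := congrFun this i
    simpa [extMap, LinearMap.restrict_apply, Fin.snoc_castSucc] using h2
  exact LinearMap.finrank_le_finrank_of_injective hinj

omit hμc in
lemma finrank_Nsub_succ_le (k : ℕ) :
    finrank ℂ (Nsub μ α (k+1)) ≤ finrank ℂ (Nsub μ α k) + 1 := by
  set ρ : Nsub μ α (k+1) →ₗ[ℂ] ℂ :=
    (LinearMap.proj (Fin.last (k+1))).comp (Nsub μ α (k+1)).subtype with hρ
  have hrn := LinearMap.finrank_range_add_finrank_ker ρ
  have hrange : finrank ℂ (LinearMap.range ρ) ≤ 1 := by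
    simpa using Submodule.finrank_le (LinearMap.range ρ)
  -- injection from ker ρ into Nsub μ α k
  have hkerle : finrank ℂ (LinearMap.ker ρ) ≤ finrank ℂ (Nsub μ α k) := by
    have hmem : ∀ y : LinearMap.ker ρ,
        ((y : Nsub μ α (k+1)) : Fin (k+2) → ℂ) ∘ Fin.castSucc ∈ Nsub μ α k := by
      intro y
      have hlast : ((y : Nsub μ α (k+1)) : Fin (k+2) → ℂ) (Fin.last (k+1)) = 0 := y.2
      rw [mem_Nsub, Pk_castSucc hlast]
      exact (y : Nsub μ α (k+1)).2
    let g : LinearMap.ker ρ →ₗ[ℂ] Nsub μ α k :=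
      { toFun := fun y => ⟨((y : Nsub μ α (k+1)) : Fin (k+2) → ℂ) ∘ Fin.castSucc, hmem y⟩
        map_add' := fun a b => by ext1; rfl
        map_smul' := fun c a => by ext1; rfl }
    have hginj : Function.Injective g := by
      intro a b hab
      have h1 : ∀ i : Fin (k+1),
          ((a : Nsub μ α (k+1)) : Fin (k+2) → ℂ) (Fin.castSucc i)
          = ((b : Nsub μ α (k+1)) : Fin (k+2) → ℂ) (Fin.castSucc i) := by
        intro i
        exact congrFun (congrArg (fun y : Nsub μ α k => (y : Fin (k+1) → ℂ)) hab) i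
      ext1; ext1
      funext i
      refine Fin.lastCases ?_ (fun i => h1 i) i
      rw [show ((a : Nsub μ α (k+1)) : Fin (k+2) → ℂ) (Fin.last (k+1)) = 0 from a.2,
        show ((b : Nsub μ α (k+1)) : Fin (k+2) → ℂ) (Fin.last (k+1)) = 0 from b.2]
    exact LinearMap.finrank_le_finrank_of_injective hginj
  omega

end LinAlg


section Rank
open MvPolynomial Module

lemma nat_ivt {f : ℕ → ℕ} (hstep : ∀ i, f (i+1) ≤ f i + 1) :
    ∀ {b a v : ℕ}, a ≤ b → f a ≤ v → v ≤ f b → ∃ j, a ≤ j ∧ j ≤ b ∧ f j = v := by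
  intro b
  induction b with
  | zero =>
    intro a v hab hfa hfb
    have ha : a = 0 := Nat.le_zero.mp hab
    subst ha
    exact ⟨0, le_refl _, le_refl _, le_antisymm hfa hfb⟩
  | succ b ih =>
    intro a v hab hfa hfb
    rcases le_or_gt v (f b) with h | h
    · rcases Nat.lt_or_ge a (b+1) with h2 | h2
      · obtain ⟨j, hj1, hj2, hj3⟩ := ih (by omega) hfa h
        exact ⟨j, hj1, by omega, hj3⟩
      · have : a = b+1 := by omega
        subst this
        exact ⟨b+1, le_refl _, le_refl _, le_antisymm hfa hfb⟩
    · have := hstep b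
      exact ⟨b+1, by omega, le_refl _, by omega⟩

variable {μ : Measure (Fin d → ℂ)} [IsFiniteMeasure μ] {α : ℕ → (Fin d →₀ ℕ)}
variable (hμc : IsCompact (msupport μ))
include hμc
set_option linter.unusedSectionVars false

lemma rank_mono : Monotone (fun k => (momentMatrix μ α k).rank) := by
  apply monotone_nat_of_le_succ
  intro k
  have h1 := rank_add_finrank_Nsub (μ := μ) (α := α) hμc k
  have h2 := rank_add_finrank_Nsub (μ := μ) (α := α) hμc (k+1)
  have h3 := finrank_Nsub_succ_le (μ := μ) (α := α) k
  show (momentMatrix μ α k).rank ≤ (momentMatrix μ α (k+1)).rank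
  omega

lemma rank_step (k : ℕ) :
    (momentMatrix μ α (k+1)).rank ≤ (momentMatrix μ α k).rank + 1 := by
  have h1 := rank_add_finrank_Nsub (μ := μ) (α := α) hμc k
  have h2 := rank_add_finrank_Nsub (μ := μ) (α := α) hμc (k+1)
  have h3 := finrank_Nsub_mono (μ := μ) (α := α) k
  omega

lemma rank_zero_le : (momentMatrix μ α 0).rank ≤ 1 := by
  have h1 := rank_add_finrank_Nsub (μ := μ) (α := α) hμc 0
  omega

variable (hrank : ∀ m : ℕ, ∃ k : ℕ, m + 1 ≤ (momentMatrix μ α k).rank)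
include hrank

lemma rank_kdeg (n : ℕ) : (momentMatrix μ α (kdeg μ α n)).rank = n + 1 := by
  have hne : {k | (momentMatrix μ α k).rank = n + 1}.Nonempty := by
    obtain ⟨k, hk⟩ := hrank n
    obtain ⟨j, _, _, hj⟩ := nat_ivt (f := fun k => (momentMatrix μ α k).rank) (rank_step hμc) (Nat.zero_le k)
      (le_trans (rank_zero_le hμc) (by omega)) hk
    exact ⟨j, hj⟩
  exact Nat.sInf_mem hne

lemma kdeg_lt_succ (n : ℕ) : kdeg μ α n < kdeg μ α (n+1) := by
  have h2 := rank_kdeg hμc hrank (n+1)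
  obtain ⟨j, _, hjle, hj⟩ := nat_ivt (f := fun k => (momentMatrix μ α k).rank) (rank_step hμc) (Nat.zero_le (kdeg μ α (n+1)))
    (le_trans (rank_zero_le hμc) (by omega))
    (show n + 1 ≤ (momentMatrix μ α (kdeg μ α (n+1))).rank by omega)
  have hj' : (momentMatrix μ α j).rank = n + 1 := hj
  have hle : kdeg μ α n ≤ j := Nat.sInf_le hj'
  have hne : j ≠ kdeg μ α (n+1) := by
    intro he
    rw [he, h2] at hj'
    omega
  omega

lemma kdeg_mono : Monotone (kdeg μ α) :=
  (strictMono_nat_of_lt_succ (kdeg_lt_succ hμc hrank)).monotone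

lemma rank_eq_of_between {k n : ℕ} (h1 : kdeg μ α n ≤ k) (h2 : k < kdeg μ α (n+1)) :
    (momentMatrix μ α k).rank = n + 1 := by
  have hge : n + 1 ≤ (momentMatrix μ α k).rank := by
    have := rank_mono (μ := μ) (α := α) hμc h1
    simp only at this
    rw [rank_kdeg hμc hrank n] at this
    exact this
  by_contra h
  obtain ⟨j, hj1, hj2, hj3⟩ := nat_ivt (f := fun k => (momentMatrix μ α k).rank) (rank_step hμc) h1
    (show (momentMatrix μ α (kdeg μ α n)).rank ≤ n + 2 by rw [rank_kdeg hμc hrank n]; omega)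
    (show n + 2 ≤ (momentMatrix μ α k).rank by omega)
  have hj3' : (momentMatrix μ α j).rank = n + 2 := hj3
  have : kdeg μ α (n+1) ≤ j := Nat.sInf_le hj3'
  omega

lemma kdeg_zero (hμ0 : μ ≠ 0) (hα : AdmissibleEnum α) : kdeg μ α 0 = 0 := by
  have hbot : Nsub μ α 0 = ⊥ := by
    ext x
    rw [mem_Nsub, Submodule.mem_bot]
    constructor
    · intro hx
      have hne : (ae μ).NeBot := MeasureTheory.ae_neBot.mpr hμ0
      obtain ⟨z, hz⟩ := hx.exists
      have hz' : eval z (Pk α 0 x) = 0 := by simpa using hz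
      have heq : eval z (Pk α 0 x) = x 0 := by
        rw [Pk_apply]
        simp [hα.2.1, eval_monomial]
      rw [heq] at hz'
      funext i
      have : i = 0 := Fin.ext (by omega)
      rw [this]
      exact hz'
    · intro hx
      rw [hx]
      simp only [map_zero]
      exact Filter.Eventually.of_forall (fun z => by simp)
  have h1 := rank_add_finrank_Nsub (μ := μ) (α := α) hμc 0
  rw [hbot] at h1
  simp only [finrank_bot] at h1
  have h0 : 0 ∈ {k | (momentMatrix μ α k).rank = 0 + 1} := by
    simp only [Set.mem_setOf_eq]
    omega
  exact Nat.le_zero.mp (Nat.sInf_le h0)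

end Rank


section Decomp
open MvPolynomial Module

variable {μ : Measure (Fin d → ℂ)} [IsFiniteMeasure μ] {α : ℕ → (Fin d →₀ ℕ)}
set_option linter.unusedSectionVars false

lemma Pk_vec {k : ℕ} {q : MvPolynomial (Fin d) ℂ} (hinj : Function.Injective α)
    (hsur : Function.Surjective α) (hq : DegLE α q k) :
    Pk α k (fun i : Fin (k+1) => coeff (α (i : ℕ)) q) = q := by
  apply MvPolynomial.ext
  intro m
  obtain ⟨t, rfl⟩ := hsur m
  rw [Pk_apply, coeff_sum]
  simp only [coeff_monomial]
  by_cases ht : t ≤ k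
  · rw [Finset.sum_eq_single (⟨t, by omega⟩ : Fin (k+1))]
    · simp
    · intro i _ hne
      rw [if_neg]
      intro he
      exact hne (Fin.ext (hinj he))
    · intro habs
      exact absurd (Finset.mem_univ _) habs
  · have h0 : coeff (α t) q = 0 := by
      by_contra h
      exact ht (hq t h)
    rw [h0, Finset.sum_eq_zero]
    intro i _
    rw [if_neg]
    intro he
    have := hinj he
    omega

lemma degLE_Pk (hinj : Function.Injective α) (k : ℕ) (x : Fin (k+1) → ℂ) :
    DegLE α (Pk α k x) k := by
  intro m hm
  by_contra hmk
  apply hm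
  rw [Pk_apply, coeff_sum]
  apply Finset.sum_eq_zero
  intro i _
  rw [coeff_monomial, if_neg]
  intro he
  have := hinj he
  omega

lemma degLE_mono {q : MvPolynomial (Fin d) ℂ} {k k' : ℕ} (h : DegLE α q k) (hk : k ≤ k') :
    DegLE α q k' := fun m hm => le_trans (h m hm) hk

lemma degLE_sum {ι : Type*} (s : Finset ι) (f : ι → MvPolynomial (Fin d) ℂ) (k : ℕ)
    (h : ∀ i ∈ s, DegLE α (f i) k) : DegLE α (∑ i ∈ s, f i) k := by
  intro m hm
  rw [coeff_sum] at hm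
  obtain ⟨i, hi, hne⟩ := Finset.exists_ne_zero_of_sum_ne_zero hm
  exact h i hi m hne

lemma degLE_smul (c : ℂ) {f : MvPolynomial (Fin d) ℂ} {k : ℕ} (h : DegLE α f k) :
    DegLE α (c • f) k := by
  intro m hm
  apply h m
  intro h0
  apply hm
  rw [coeff_smul, h0, smul_zero]

variable {p : ℕ → MvPolynomial (Fin d) ℂ}

lemma hON_all (hp : IsONBasis μ α p) (i j : ℕ) :
    inner2 μ (p i) (p j) = if i = j then 1 else 0 :=
  (hp (max i j)).1 i (le_max_left i j) j (le_max_right i j)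

lemma degLE_p (hμc : IsCompact (msupport μ))
    (hrank : ∀ m : ℕ, ∃ k : ℕ, m + 1 ≤ (momentMatrix μ α k).rank)
    (hinj : Function.Injective α) (hp : IsONBasis μ α p) (m : ℕ) :
    DegLE α (p m) (kdeg μ α m) := by
  obtain ⟨c, _, _, hrep⟩ := (hp m).2 m le_rfl
  intro t ht
  rw [hrep, coeff_sum] at ht
  obtain ⟨i, _, hne⟩ := Finset.exists_ne_zero_of_sum_ne_zero ht
  rw [coeff_monomial] at hne
  by_cases he : α (kdeg μ α (i : ℕ)) = α t
  · have h1 : kdeg μ α (i : ℕ) = t := hinj he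
    rw [← h1]
    exact kdeg_mono hμc hrank (by omega : (i : ℕ) ≤ m)
  · rw [if_neg he] at hne
    exact absurd rfl hne

/-- Every polynomial of degree ≤ k (with `kdeg n ≤ k < kdeg (n+1)`) decomposes as a combination
of `p 0, …, p n` plus a polynomial vanishing `μ`-a.e. of degree ≤ k. -/
lemma decomp (hμc : IsCompact (msupport μ))
    (hrank : ∀ m : ℕ, ∃ k : ℕ, m + 1 ≤ (momentMatrix μ α k).rank)
    (hα : AdmissibleEnum α) (hp : IsONBasis μ α p) {k n : ℕ}
    (h1 : kdeg μ α n ≤ k) (h2 : k < kdeg μ α (n+1))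
    (q : MvPolynomial (Fin d) ℂ) (hq : DegLE α q k) :
    ∃ (a : Fin (n+1) → ℂ) (r : MvPolynomial (Fin d) ℂ),
      q = (∑ j : Fin (n+1), a j • p (j : ℕ)) + r ∧
      (fun z => eval z r) =ᵐ[μ] 0 ∧ DegLE α r k := by
  classical
  have hinj : Function.Injective α := hα.1.1
  have hsur : Function.Surjective α := hα.1.2
  -- coefficient vectors of the p j
  set cvec : Fin (n+1) → (Fin (k+1) → ℂ) :=
    fun j i => coeff (α (i : ℕ)) (p (j : ℕ)) with hcvec
  have hPkc : ∀ j : Fin (n+1), Pk α k (cvec j) = p (j : ℕ) := by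
    intro j
    exact Pk_vec hinj hsur (degLE_mono (degLE_p hμc hrank hinj hp (j : ℕ))
      (le_trans (kdeg_mono hμc hrank (by omega : (j : ℕ) ≤ n)) h1))
  -- key: combinations of cvec in the null space are trivial
  have key : ∀ a : Fin (n+1) → ℂ, (∑ j : Fin (n+1), a j • cvec j) ∈ Nsub μ α k → a = 0 := by
    intro a ha
    have hPsum : Pk α k (∑ j : Fin (n+1), a j • cvec j)
        = ∑ j : Fin (n+1), a j • p (j : ℕ) := by
      rw [map_sum]
      congr 1
      funext j
      rw [_root_.map_smul, hPkc]
    rw [mem_Nsub, hPsum] at ha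
    funext i
    have h0 : inner2 μ (∑ j : Fin (n+1), a j • p (j : ℕ)) (p (i : ℕ)) = 0 :=
      inner2_zero_left_of_ae hμc ha _
    rw [inner2_sum_left hμc] at h0
    simp only [inner2_smul_left hμc, hON_all hp, Fin.val_inj] at h0
    simpa using h0
  -- the span of the cvec's
  have hli : LinearIndependent ℂ cvec := by
    rw [Fintype.linearIndependent_iff]
    intro a ha
    have := key a (by rw [ha]; exact (Nsub μ α k).zero_mem)
    intro i
    exact congrFun this i
  set W : Submodule ℂ (Fin (k+1) → ℂ) := Submodule.span ℂ (Set.range cvec) with hW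
  have hWrank : finrank ℂ W = n + 1 := by
    rw [hW, finrank_span_eq_card hli]
    simp
  have hinf : W ⊓ Nsub μ α k = ⊥ := by
    rw [Submodule.eq_bot_iff]
    intro x hx
    obtain ⟨a, ha⟩ := (Submodule.mem_span_range_iff_exists_fun ℂ).1 hx.1
    have ha0 := key a (by rw [ha]; exact hx.2)
    rw [← ha, ha0]
    simp
  have hNrank : (momentMatrix μ α k).rank + finrank ℂ (Nsub μ α k) = k + 1 :=
    rank_add_finrank_Nsub hμc k
  have hMrank : (momentMatrix μ α k).rank = n + 1 := rank_eq_of_between hμc hrank h1 h2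
  have htop : W ⊔ Nsub μ α k = ⊤ := by
    apply Submodule.eq_top_of_finrank_eq
    have hse := Submodule.finrank_sup_add_finrank_inf_eq W (Nsub μ α k)
    rw [hinf] at hse
    simp only [finrank_bot, add_zero] at hse
    rw [Module.finrank_fintype_fun_eq_card]
    simp only [Fintype.card_fin]
    omega
  -- decompose q
  set x : Fin (k+1) → ℂ := fun i => coeff (α (i : ℕ)) q with hx
  have hPx : Pk α k x = q := Pk_vec hinj hsur hq
  have hxmem : x ∈ W ⊔ Nsub μ α k := by rw [htop]; exact Submodule.mem_top
  obtain ⟨y, hy, ν, hν, hyν⟩ := Submodule.mem_sup.1 hxmem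
  obtain ⟨a, ha⟩ := (Submodule.mem_span_range_iff_exists_fun ℂ).1 hy
  refine ⟨a, Pk α k ν, ?_, hν, degLE_Pk hinj k ν⟩
  have : q = Pk α k y + Pk α k ν := by
    rw [← map_add, hyν, hPx]
  rw [this]
  congr 1
  rw [← ha, map_sum]
  congr 1
  funext j
  rw [_root_.map_smul, hPkc]

end Decomp


section Final
open MvPolynomial Module Complex

variable {μ : Measure (Fin d → ℂ)} [IsFiniteMeasure μ] {α : ℕ → (Fin d →₀ ℕ)}
  {p : ℕ → MvPolynomial (Fin d) ℂ}
set_option linter.unusedSectionVars false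

lemma eval_span (n : ℕ) (c : Fin (n+1) → ℂ) (z : Fin d → ℂ) :
    eval z (∑ j : Fin (n+1), c j • p (j : ℕ))
      = ∑ j : Fin (n+1), c j * eval z (p (j : ℕ)) := by
  rw [map_sum]
  congr 1
  funext j
  simp [smul_eq_C_mul]

variable (hμc : IsCompact (msupport μ))
include hμc

lemma eq_zero_on_msupport {f : (Fin d → ℂ) → ℂ} (hf : Continuous f)
    (h : f =ᵐ[μ] 0) : ∀ y ∈ msupport μ, f y = 0 := by
  intro y hy
  by_contra hne
  have hU : IsOpen {w : Fin d → ℂ | f w ≠ 0} := isOpen_ne.preimage hf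
  have h0 : μ {w : Fin d → ℂ | f w ≠ 0} = 0 := by
    have h' := h
    rw [Filter.EventuallyEq, MeasureTheory.ae_iff] at h'
    simpa using h'
  exact hy {w | f w ≠ 0} hne hU h0

lemma inner2_add_left (f g h : MvPolynomial (Fin d) ℂ) :
    inner2 μ (f + g) h = inner2 μ f h + inner2 μ g h := by
  simp only [inner2, map_add, add_mul]
  exact integral_add (integrable_i2 hμc f h) (integrable_i2 hμc g h)

lemma inner2_add_right (f g h : MvPolynomial (Fin d) ℂ) :
    inner2 μ f (g + h) = inner2 μ f g + inner2 μ f h := by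
  simp only [inner2, map_add, mul_add]
  exact integral_add (integrable_i2 hμc f g) (integrable_i2 hμc f h)

lemma inner2_span (hp : IsONBasis μ α p) (n : ℕ) (c : Fin (n+1) → ℂ) :
    inner2 μ (∑ j : Fin (n+1), c j • p (j : ℕ)) (∑ j : Fin (n+1), c j • p (j : ℕ))
      = ((∑ j : Fin (n+1), Complex.normSq (c j) : ℝ) : ℂ) := by
  rw [inner2_sum_left hμc]
  have hterm : ∀ i : Fin (n+1),
      inner2 μ (c i • p (i : ℕ)) (∑ j : Fin (n+1), c j • p (j : ℕ))
        = ((Complex.normSq (c i) : ℝ) : ℂ) := by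
    intro i
    rw [inner2_sum_right hμc, Finset.sum_eq_single i]
    · rw [inner2_smul_left hμc, inner2_smul_right hμc, hON_all hp, if_pos rfl]
      rw [mul_one, Complex.mul_conj]
    · intro j _ hne
      rw [inner2_smul_left hμc, inner2_smul_right hμc, hON_all hp,
        if_neg (by simpa [Fin.val_inj] using hne.symm)]
      simp
    · intro habs
      exact absurd (Finset.mem_univ _) habs
  simp only [hterm]
  norm_cast

lemma norm2_span (hp : IsONBasis μ α p) (n : ℕ) (c : Fin (n+1) → ℂ) :
    norm2 μ (∑ j : Fin (n+1), c j • p (j : ℕ))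
      = Real.sqrt (∑ j : Fin (n+1), Complex.normSq (c j)) := by
  rw [norm2, inner2_span hμc hp, Complex.ofReal_re]

omit hμc in
lemma CDkernel_self (n : ℕ) (z : Fin d → ℂ) :
    CDkernel p n z z
      = ((∑ j ∈ Finset.range (n+1), Complex.normSq (eval z (p j)) : ℝ) : ℂ) := by
  rw [CDkernel]
  simp_rw [Complex.mul_conj]
  norm_cast

omit hμc in
lemma CDkernel_re (n : ℕ) (z : Fin d → ℂ) :
    (CDkernel p n z z).re = ∑ j ∈ Finset.range (n+1), Complex.normSq (eval z (p j)) := by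
  rw [CDkernel_self, Complex.ofReal_re]

lemma CDkernel_pos (hμ0 : μ ≠ 0) (hα : AdmissibleEnum α)
    (hrank : ∀ m : ℕ, ∃ k : ℕ, m + 1 ≤ (momentMatrix μ α k).rank)
    (hp : IsONBasis μ α p) (n : ℕ) (z : Fin d → ℂ) :
    0 < (CDkernel p n z z).re := by
  rw [CDkernel_re]
  have h0 : 0 < Complex.normSq (eval z (p 0)) := by
    obtain ⟨c, hc1, hc2, hrep⟩ := (hp 0).2 0 le_rfl
    have hk0 : kdeg μ α 0 = 0 := kdeg_zero hμc hrank hμ0 hα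
    have hp0 : p 0 = monomial 0 (c 0) := by
      rw [hrep, Fin.sum_univ_one]
      simp only [Fin.val_zero, hk0, hα.2.1]
    rw [hp0, eval_monomial]
    simp only [Finsupp.prod_zero_index, mul_one]
    apply Complex.normSq_pos.mpr
    intro hc0
    rw [show (0 : Fin 1) = Fin.last 0 from rfl] at hc0
    rw [hc0] at hc1
    simp at hc1
  calc 0 < Complex.normSq (eval z (p 0)) := h0
    _ ≤ _ := Finset.single_le_sum (f := fun j => Complex.normSq (eval z (p j)))
        (fun j _ => Complex.normSq_nonneg _) (Finset.mem_range.mpr (by omega))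

lemma span_lower (hp : IsONBasis μ α p) (n : ℕ) (z : Fin d → ℂ) (c : Fin (n+1) → ℂ)
    (hK : 0 < (CDkernel p n z z).re)
    (hev : eval z (∑ j : Fin (n+1), c j • p (j : ℕ)) = 1) :
    1 / Real.sqrt ((CDkernel p n z z).re) ≤ norm2 μ (∑ j : Fin (n+1), c j • p (j : ℕ)) := by
  set K := (CDkernel p n z z).re with hKdef
  set S := ∑ j : Fin (n+1), Complex.normSq (c j) with hSdef
  have h1 : (1 : ℝ) ≤ Real.sqrt S * Real.sqrt K := by
    have he : ‖∑ j : Fin (n+1), c j * eval z (p (j : ℕ))‖ = 1 := by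
      rw [← eval_span, hev, norm_one]
    calc (1 : ℝ) = ‖∑ j : Fin (n+1), c j * eval z (p (j : ℕ))‖ := he.symm
      _ ≤ ∑ j : Fin (n+1), ‖c j * eval z (p (j : ℕ))‖ := norm_sum_le _ _
      _ = ∑ j : Fin (n+1), ‖c j‖ * ‖eval z (p (j : ℕ))‖ := by simp [norm_mul]
      _ ≤ Real.sqrt (∑ j : Fin (n+1), ‖c j‖ ^ 2)
            * Real.sqrt (∑ j : Fin (n+1), ‖eval z (p (j : ℕ))‖ ^ 2) :=
        Real.sum_mul_le_sqrt_mul_sqrt _ _ _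
      _ = Real.sqrt S * Real.sqrt K := by
        congr 1
        · congr 1
          rw [hSdef]
          congr 1
          funext j
          rw [← Complex.sq_norm]
        · congr 1
          rw [hKdef, CDkernel_re, ← Fin.sum_univ_eq_sum_range
            (fun j => Complex.normSq (eval z (p j))) (n+1)]
          congr 1
          funext j
          rw [← Complex.sq_norm]
  rw [norm2_span hμc hp, div_le_iff₀ (Real.sqrt_pos.mpr hK)]
  exact h1

lemma extremal_mem (hp : IsONBasis μ α p) (n : ℕ) (z : Fin d → ℂ)
    (hK : 0 < (CDkernel p n z z).re) :
    ∃ c : Fin (n+1) → ℂ,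
      eval z (∑ j : Fin (n+1), c j • p (j : ℕ)) = 1 ∧
      norm2 μ (∑ j : Fin (n+1), c j • p (j : ℕ))
        = 1 / Real.sqrt ((CDkernel p n z z).re) := by
  classical
  set Kc := CDkernel p n z z with hKc
  set Kr := (CDkernel p n z z).re with hKr
  have hKreal : Kc = ((Kr : ℝ) : ℂ) := by
    rw [hKc, CDkernel_self]
    rw [hKr, CDkernel_re]
  have hKne : Kc ≠ 0 := by
    rw [hKreal]
    exact_mod_cast ne_of_gt hK
  refine ⟨fun j => (starRingEnd ℂ) (eval z (p (j : ℕ))) / Kc, ?_, ?_⟩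
  · rw [eval_span]
    have hterm : ∀ j : Fin (n+1),
        (starRingEnd ℂ) (eval z (p (j : ℕ))) / Kc * eval z (p (j : ℕ))
          = ((Complex.normSq (eval z (p (j : ℕ))) : ℝ) : ℂ) / Kc := by
      intro j
      rw [div_mul_eq_mul_div, mul_comm, Complex.mul_conj]
    rw [Finset.sum_congr rfl (fun j _ => hterm j), ← Finset.sum_div]
    rw [show (∑ j : Fin (n+1), ((Complex.normSq (eval z (p (j : ℕ))) : ℝ) : ℂ)) = Kc by
      rw [hKc, CDkernel_self]
      rw [← Fin.sum_univ_eq_sum_range (fun j => Complex.normSq (eval z (p j))) (n+1)]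
      norm_cast]
    exact div_self hKne
  · rw [norm2_span hμc hp]
    have hterm : ∀ j : Fin (n+1),
        Complex.normSq ((starRingEnd ℂ) (eval z (p (j : ℕ))) / Kc)
          = Complex.normSq (eval z (p (j : ℕ))) / Kr ^ 2 := by
      intro j
      rw [Complex.normSq_div, Complex.normSq_conj, hKreal]
      norm_cast
      rw [Complex.normSq_ofReal]  
      ring_nf
    rw [Finset.sum_congr rfl (fun j _ => hterm j), ← Finset.sum_div]
    rw [show (∑ j : Fin (n+1), Complex.normSq (eval z (p (j : ℕ)))) = Kr by
      rw [hKr, CDkernel_re, ← Fin.sum_univ_eq_sum_range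
        (fun j => Complex.normSq (eval z (p j))) (n+1)]]
    rw [show Kr / Kr ^ 2 = 1 / Kr by field_simp]
    rw [one_div, Real.sqrt_inv, one_div]

end Final


/-- Extremal characterizations of the Christoffel function `1/K_n^μ(z,z)`. -/
theorem statement2 (μ : Measure (Fin d → ℂ)) [IsFiniteMeasure μ]
    (hμ0 : μ ≠ 0) (hμc : IsCompact (msupport μ))
    (α : ℕ → (Fin d →₀ ℕ)) (hα : AdmissibleEnum α)
    (hrank : ∀ m : ℕ, ∃ k : ℕ, m + 1 ≤ (momentMatrix μ α k).rank)
    (p : ℕ → MvPolynomial (Fin d) ℂ) (hp : IsONBasis μ α p) :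
    (∀ (n : ℕ) (z : Fin d → ℂ),
      IsLeast {r : ℝ | ∃ q ∈ Lspan p n, MvPolynomial.eval z q = 1 ∧ r = norm2 μ q}
        (1 / Real.sqrt ((CDkernel p n z z).re))) ∧
    (∀ k n : ℕ, kdeg μ α n ≤ k → k < kdeg μ α (n + 1) →
      ∀ z ∈ Svariety μ α (n + 1),
      IsLeast {r : ℝ | ∃ q : MvPolynomial (Fin d) ℂ,
          DegLE α q k ∧ MvPolynomial.eval z q = 1 ∧ r = norm2 μ q}
        (1 / Real.sqrt ((CDkernel p n z z).re))) := by
  classical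
  obtain ⟨⟨hinj, hsur⟩, hα0, hstepα⟩ := hα
  have hKpos : ∀ (n : ℕ) (z : Fin d → ℂ), 0 < (CDkernel p n z z).re :=
    fun n z => CDkernel_pos hμc hμ0 ⟨⟨hinj, hsur⟩, hα0, hstepα⟩ hrank hp n z
  constructor
  · intro n z
    constructor
    · obtain ⟨c, hev, hnorm⟩ := extremal_mem hμc hp n z (hKpos n z)
      exact ⟨_, ⟨c, rfl⟩, hev, hnorm.symm⟩
    · rintro r ⟨q, ⟨c, rfl⟩, hev, rfl⟩
      exact span_lower hμc hp n z c (hKpos n z) hev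
  · intro k n h1 h2 z hz
    constructor
    · obtain ⟨c, hev, hnorm⟩ := extremal_mem hμc hp n z (hKpos n z)
      refine ⟨∑ j : Fin (n+1), c j • p (j : ℕ), ?_, hev, hnorm.symm⟩
      apply degLE_sum
      intro j _
      exact degLE_smul _ (degLE_mono (degLE_p hμc hrank hinj hp _)
        (le_trans (kdeg_mono hμc hrank (by omega : (j : ℕ) ≤ n)) h1))
    · rintro r ⟨q, hdeg, hev, rfl⟩
      obtain ⟨a, rr, hqeq, hae, hdegr⟩ :=
        decomp hμc hrank ⟨⟨hinj, hsur⟩, hα0, hstepα⟩ hp h1 h2 q hdeg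
      have hrz : MvPolynomial.eval z rr = 0 := by
        apply hz
        refine ⟨fun y hy => eq_zero_on_msupport hμc rr.continuous_eval hae y hy, ?_⟩
        exact degLE_mono hdegr (le_of_lt h2)
      have hev1 : MvPolynomial.eval z (∑ j : Fin (n+1), a j • p (j : ℕ)) = 1 := by
        rw [hqeq, map_add, hrz, add_zero] at hev
        exact hev
      have hnorm : norm2 μ q = norm2 μ (∑ j : Fin (n+1), a j • p (j : ℕ)) := by
        rw [hqeq, norm2, norm2]
        congr 2
        rw [inner2_add_left hμc, inner2_add_right hμc,
          inner2_zero_left_of_ae hμc hae, inner2_zero_right_of_ae hμc hae,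
          add_zero, add_zero]
      rw [hnorm]
      exact span_lower hμc hp n z a (hKpos n z) hev1

end CD
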